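/- Let G and H be graphs with no isolated vertices such that γ_p(G) ≥ 2 and γ_p(H) ≥ 2. Then the join G + H satisfies γ_p(G + H) = 2 and rad_p(G + H) = 1. -/

import Mathlib

open scoped Classical

/-- The closed neighbourhood `N[S]` of a finset of vertices. -/
noncomputable def closedNbhd {V : Type*} [Fintype V] (G : SimpleGraph V) (S : Finset V) :
    Finset V :=
  S ∪ S.biUnion fun v => G.neighborFinset v

/-- One propagation step of power domination. -/
noncomputable def pdStep {V : Type*} [Fintype V] (G : SimpleGraph V) (A : Finset V) : Finset V :=
  A ∪ closedNbhd G (A.filter fun v => (G.neighborFinset v \ A).card ≤ 1)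

/-- The monitored sets `P^i(S)`, with `P^0(S) = ∅` and `P^1(S) = N[S]`. -/
noncomputable def pdSeq {V : Type*} [Fintype V] (G : SimpleGraph V) (S : Finset V) : ℕ → Finset V
  | 0 => ∅
  | 1 => closedNbhd G S
  | (i + 2) => pdStep G (pdSeq G S (i + 1))

/-- `S` is a power dominating set of `G`. -/
def IsPDS {V : Type*} [Fintype V] (G : SimpleGraph V) (S : Finset V) : Prop :=
  ∃ i, pdSeq G S i = Finset.univ

/-- The power domination number `γ_p(G)`. -/
noncomputable def pdNum {V : Type*} [Fintype V] (G : SimpleGraph V) : ℕ :=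
  sInf {k | ∃ S : Finset V, IsPDS G S ∧ S.card = k}

/-- The propagation radius `rad_p(G, S)` of a PDS `S`. -/
noncomputable def pdRadS {V : Type*} [Fintype V] (G : SimpleGraph V) (S : Finset V) : ℕ :=
  sInf {i | pdSeq G S i = Finset.univ}

/-- The propagation radius `rad_p(G)`. -/
noncomputable def pdRad {V : Type*} [Fintype V] (G : SimpleGraph V) : ℕ :=
  sInf {r | ∃ S : Finset V, IsPDS G S ∧ S.card = pdNum G ∧ pdRadS G S = r}

/-- The join `G + H` of two graphs on disjoint vertex sets: all edges of `G` and `H`,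
together with every edge between the two sides. -/
def graphJoin {V W : Type*} (G : SimpleGraph V) (H : SimpleGraph W) :
    SimpleGraph (V ⊕ W) where
  Adj x y :=
    Sum.elim (fun a => Sum.elim (fun b => G.Adj a b) (fun _ => True) y)
      (fun a => Sum.elim (fun _ => True) (fun b => H.Adj a b) y) x
  symm := by
    refine ⟨?_⟩
    rintro (a | a) (b | b) h <;> simp only [Sum.elim_inl, Sum.elim_inr] at h ⊢
    · exact G.adj_symm h
    · exact H.adj_symm h
  loopless := by
    refine ⟨?_⟩
    rintro (a | a) h <;> simp only [Sum.elim_inl, Sum.elim_inr] at h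
    · exact G.irrefl h
    · exact H.irrefl h


set_option linter.unusedSectionVars false
section Aux
variable {V W : Type*} [Fintype V] [Fintype W] {G : SimpleGraph V} {H : SimpleGraph W}

lemma mem_closedNbhd {S : Finset V} {x : V} :
    x ∈ closedNbhd G S ↔ x ∈ S ∨ ∃ v ∈ S, G.Adj v x := by
  simp [closedNbhd]

lemma mem_pdStep {A : Finset V} {x : V} :
    x ∈ pdStep G A ↔ x ∈ A ∨ ∃ v ∈ A, (G.neighborFinset v \ A).card ≤ 1 ∧ (x = v ∨ G.Adj v x) := by
  rw [pdStep, Finset.mem_union, mem_closedNbhd]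
  simp only [Finset.mem_filter]
  aesop

@[simp] lemma join_adj_ll {a b : V} : (graphJoin G H).Adj (Sum.inl a) (Sum.inl b) ↔ G.Adj a b := Iff.rfl
@[simp] lemma join_adj_lr {a : V} {b : W} : (graphJoin G H).Adj (Sum.inl a) (Sum.inr b) := trivial
@[simp] lemma join_adj_rl {a : W} {b : V} : (graphJoin G H).Adj (Sum.inr a) (Sum.inl b) := trivial
@[simp] lemma join_adj_rr {a b : W} : (graphJoin G H).Adj (Sum.inr a) (Sum.inr b) ↔ H.Adj a b := Iff.rfl

lemma pd_complete (hG : ∀ v : V, ∃ u, G.Adj v u) {A : Finset V}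
    (h : (Finset.univ \ A).card ≤ 1) : pdStep G A = Finset.univ := by
  apply Finset.eq_univ_iff_forall.mpr
  intro y
  by_cases hy : y ∈ A
  · exact mem_pdStep.mpr (Or.inl hy)
  · have hmem : y ∈ Finset.univ \ A := by simp [hy]
    have hset : Finset.univ \ A = {y} := by
      apply Finset.eq_singleton_iff_unique_mem.mpr
      refine ⟨hmem, fun z hz => ?_⟩
      by_contra hzy
      have : 2 ≤ (Finset.univ \ A).card := Finset.one_lt_card.mpr ⟨z, hz, y, hmem, hzy⟩
      omega
    obtain ⟨u, hu⟩ := hG y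
    have huA : u ∈ A := by
      by_contra huA
      have : u ∈ Finset.univ \ A := by simp [huA]
      rw [hset, Finset.mem_singleton] at this
      exact G.ne_of_adj hu.symm this
    refine mem_pdStep.mpr (Or.inr ⟨u, huA, ?_, Or.inr (G.adj_symm hu)⟩)
    calc (G.neighborFinset u \ A).card ≤ (Finset.univ \ A).card :=
          Finset.card_le_card (Finset.sdiff_subset_sdiff (Finset.subset_univ _) le_rfl)
      _ ≤ 1 := h

end Aux

set_option linter.unusedSectionVars false
attribute [-instance] instDecidableEqSum
section Join
variable {V W : Type*} [Fintype V] [Fintype W] {G : SimpleGraph V} {H : SimpleGraph W}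

/-- Lift a finset on the left component, together with all of the right component. -/
noncomputable def liftL (A : Finset V) : Finset (V ⊕ W) :=
  A.map ⟨Sum.inl, Sum.inl_injective⟩ ∪ Finset.univ.map ⟨Sum.inr, Sum.inr_injective⟩

@[simp] lemma mem_liftL_inl {A : Finset V} {a : V} : Sum.inl a ∈ (liftL (W := W) A) ↔ a ∈ A := by
  simp [liftL]

@[simp] lemma mem_liftL_inr {A : Finset V} {b : W} : Sum.inr b ∈ (liftL (W := W) A) := by
  simp [liftL]

lemma join_nbr_diff_inl {A : Finset V} (a : V) :
    ((graphJoin G H).neighborFinset (Sum.inl a) \ liftL A).card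
      = (G.neighborFinset a \ A).card := by
  have : (graphJoin G H).neighborFinset (Sum.inl a) \ liftL A
      = (G.neighborFinset a \ A).map ⟨Sum.inl, Sum.inl_injective⟩ := by
    ext (x | x) <;> simp [SimpleGraph.mem_neighborFinset]
  rw [this, Finset.card_map]

lemma join_nbr_diff_inr {A : Finset V} (b : W) :
    ((graphJoin G H).neighborFinset (Sum.inr b) \ liftL A).card
      = ((Finset.univ \ A).card + (H.neighborFinset b \ Finset.univ).card) := by
  have : (graphJoin G H).neighborFinset (Sum.inr b) \ liftL A
      = (Finset.univ \ A).map ⟨Sum.inl, Sum.inl_injective⟩ := by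
    ext (x | x) <;> simp [SimpleGraph.mem_neighborFinset]
  rw [this, Finset.card_map]
  simp

lemma join_closedNbhd_singleton_inl (v : V) :
    closedNbhd (graphJoin G H) {Sum.inl v} = liftL (closedNbhd G {v}) := by
  ext (x | x) <;> simp [mem_closedNbhd]

lemma join_step_left {A : Finset V} (hA : 2 ≤ (Finset.univ \ A).card) :
    pdStep (graphJoin G H) (liftL A) = liftL (pdStep G A) := by
  ext (x | x)
  · simp only [mem_pdStep, mem_liftL_inl]
    constructor
    · rintro (h | ⟨(y | y), hy, hcard, hxy⟩)
      · exact Or.inl h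
      · refine Or.inr ⟨y, mem_liftL_inl.mp hy, ?_, ?_⟩
        · rwa [join_nbr_diff_inl] at hcard
        · rcases hxy with h | h
          · exact Or.inl (Sum.inl_injective h)
          · exact Or.inr h
      · exfalso
        rw [join_nbr_diff_inr] at hcard
        omega
    · rintro (h | ⟨y, hy, hcard, hxy⟩)
      · exact Or.inl h
      · refine Or.inr ⟨Sum.inl y, mem_liftL_inl.mpr hy, ?_, ?_⟩
        · rwa [join_nbr_diff_inl]
        · rcases hxy with h | h
          · exact Or.inl (by rw [h])
          · exact Or.inr h
  · simp [mem_pdStep]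

lemma join_seq_left (v : V) : ∀ i : ℕ, 1 ≤ i →
    pdSeq (graphJoin G H) {Sum.inl v} i = liftL (pdSeq G {v} i)
      ∨ ∃ j, (Finset.univ \ pdSeq G {v} j).card ≤ 1
  | 0, h => by omega
  | 1, _ => Or.inl (join_closedNbhd_singleton_inl v)
  | (i + 2), _ => by
    rcases join_seq_left v (i + 1) (by omega) with h | h
    · by_cases hc : 2 ≤ (Finset.univ \ pdSeq G {v} (i + 1)).card
      · left
        show pdStep _ _ = _
        rw [h, join_step_left hc]
        rfl
      · exact Or.inr ⟨i + 1, by omega⟩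
    · exact Or.inr h

lemma not_isPDS_singleton_inl (hG : ∀ v : V, ∃ u, G.Adj v u) (hgG : 2 ≤ pdNum G) (v : V) :
    ¬ IsPDS (graphJoin G H) {Sum.inl v} := by
  obtain ⟨u, hu⟩ := hG v
  have hVcard : 2 ≤ Fintype.card V := Fintype.one_lt_card_iff.mpr ⟨v, u, (G.ne_of_adj hu)⟩
  rintro ⟨i, hi⟩
  have key : ∃ j, (Finset.univ \ pdSeq G {v} j).card ≤ 1 := by
    rcases Nat.eq_zero_or_pos i with rfl | hpos
    · exfalso
      have hne : (Finset.univ : Finset (V ⊕ W)).Nonempty := ⟨Sum.inl v, Finset.mem_univ _⟩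
      rw [show pdSeq (graphJoin G H) {Sum.inl v} 0 = ∅ from rfl] at hi
      rw [← hi] at hne
      exact Finset.not_nonempty_empty hne
    · rcases join_seq_left (H := H) v i hpos with h | h
      · refine ⟨i, ?_⟩
        have hT : pdSeq G {v} i = Finset.univ := by
          apply Finset.eq_univ_iff_forall.mpr
          intro a
          have := Finset.eq_univ_iff_forall.mp (h ▸ hi) (Sum.inl a)
          exact mem_liftL_inl.mp this
        rw [hT]
        simp
      · exact h
  obtain ⟨j, hj⟩ := key
  rcases j with _ | k
  · rw [show pdSeq G {v} 0 = ∅ from rfl, Finset.sdiff_empty, Finset.card_univ] at hj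
    omega
  · have hPDS : IsPDS G {v} := ⟨k + 2, by
      show pdStep _ _ = _
      exact pd_complete hG hj⟩
    have : pdNum G ≤ 1 := Nat.sInf_le ⟨{v}, hPDS, Finset.card_singleton v⟩
    omega

end Join

set_option linter.unusedSectionVars false
section JoinR
variable {V W : Type*} [Fintype V] [Fintype W] {G : SimpleGraph V} {H : SimpleGraph W}

/-- Lift a finset on the right component, together with all of the left component. -/
noncomputable def liftR (A : Finset W) : Finset (V ⊕ W) :=
  Finset.univ.map ⟨Sum.inl, Sum.inl_injective⟩ ∪ A.map ⟨Sum.inr, Sum.inr_injective⟩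

@[simp] lemma mem_liftR_inr {A : Finset W} {a : W} : Sum.inr a ∈ (liftR (V := V) A) ↔ a ∈ A := by
  simp [liftR]

@[simp] lemma mem_liftR_inl {A : Finset W} {b : V} : Sum.inl b ∈ (liftR (V := V) A) := by
  simp [liftR]

lemma join_nbr_diff_inr' {A : Finset W} (a : W) :
    ((graphJoin G H).neighborFinset (Sum.inr a) \ liftR A).card
      = (H.neighborFinset a \ A).card := by
  have : (graphJoin G H).neighborFinset (Sum.inr a) \ liftR A
      = (H.neighborFinset a \ A).map ⟨Sum.inr, Sum.inr_injective⟩ := by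
    ext (x | x) <;> simp [SimpleGraph.mem_neighborFinset]
  rw [this, Finset.card_map]

lemma join_nbr_diff_inl' {A : Finset W} (b : V) :
    ((graphJoin G H).neighborFinset (Sum.inl b) \ liftR A).card
      = (Finset.univ \ A).card := by
  have : (graphJoin G H).neighborFinset (Sum.inl b) \ liftR A
      = (Finset.univ \ A).map ⟨Sum.inr, Sum.inr_injective⟩ := by
    ext (x | x) <;> simp [SimpleGraph.mem_neighborFinset]
  rw [this, Finset.card_map]

lemma join_closedNbhd_singleton_inr (w : W) :
    closedNbhd (graphJoin G H) {Sum.inr w} = liftR (closedNbhd H {w}) := by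
  ext (x | x) <;> simp [mem_closedNbhd]

lemma join_step_right {A : Finset W} (hA : 2 ≤ (Finset.univ \ A).card) :
    pdStep (graphJoin G H) (liftR A) = liftR (pdStep H A) := by
  ext (x | x)
  · simp [mem_pdStep]
  · simp only [mem_pdStep, mem_liftR_inr]
    constructor
    · rintro (h | ⟨(y | y), hy, hcard, hxy⟩)
      · exact Or.inl h
      · exfalso
        rw [join_nbr_diff_inl'] at hcard
        omega
      · refine Or.inr ⟨y, mem_liftR_inr.mp hy, ?_, ?_⟩
        · rwa [join_nbr_diff_inr'] at hcard
        · rcases hxy with h | h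
          · exact Or.inl (Sum.inr_injective h)
          · exact Or.inr h
    · rintro (h | ⟨y, hy, hcard, hxy⟩)
      · exact Or.inl h
      · refine Or.inr ⟨Sum.inr y, mem_liftR_inr.mpr hy, ?_, ?_⟩
        · rwa [join_nbr_diff_inr']
        · rcases hxy with h | h
          · exact Or.inl (by rw [h])
          · exact Or.inr h

lemma join_seq_right (w : W) : ∀ i : ℕ, 1 ≤ i →
    pdSeq (graphJoin G H) {Sum.inr w} i = liftR (pdSeq H {w} i)
      ∨ ∃ j, (Finset.univ \ pdSeq H {w} j).card ≤ 1
  | 0, h => by omega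
  | 1, _ => Or.inl (join_closedNbhd_singleton_inr w)
  | (i + 2), _ => by
    rcases join_seq_right w (i + 1) (by omega) with h | h
    · by_cases hc : 2 ≤ (Finset.univ \ pdSeq H {w} (i + 1)).card
      · left
        show pdStep _ _ = _
        rw [h, join_step_right hc]
        rfl
      · exact Or.inr ⟨i + 1, by omega⟩
    · exact Or.inr h

lemma not_isPDS_singleton_inr (hH : ∀ w : W, ∃ u, H.Adj w u) (hgH : 2 ≤ pdNum H) (w : W) :
    ¬ IsPDS (graphJoin G H) {Sum.inr w} := by
  obtain ⟨u, hu⟩ := hH w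
  have hWcard : 2 ≤ Fintype.card W := Fintype.one_lt_card_iff.mpr ⟨w, u, (H.ne_of_adj hu)⟩
  rintro ⟨i, hi⟩
  have key : ∃ j, (Finset.univ \ pdSeq H {w} j).card ≤ 1 := by
    rcases Nat.eq_zero_or_pos i with rfl | hpos
    · exfalso
      have hne : (Finset.univ : Finset (V ⊕ W)).Nonempty := ⟨Sum.inr w, Finset.mem_univ _⟩
      rw [show pdSeq (graphJoin G H) {Sum.inr w} 0 = ∅ from rfl] at hi
      rw [← hi] at hne
      exact Finset.not_nonempty_empty hne
    · rcases join_seq_right (G := G) w i hpos with h | h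
      · refine ⟨i, ?_⟩
        have hT : pdSeq H {w} i = Finset.univ := by
          apply Finset.eq_univ_iff_forall.mpr
          intro a
          have := Finset.eq_univ_iff_forall.mp (h ▸ hi) (Sum.inr a)
          exact mem_liftR_inr.mp this
        rw [hT]
        simp
      · exact h
  obtain ⟨j, hj⟩ := key
  rcases j with _ | k
  · rw [show pdSeq H {w} 0 = ∅ from rfl, Finset.sdiff_empty, Finset.card_univ] at hj
    omega
  · have hPDS : IsPDS H {w} := ⟨k + 2, by
      show pdStep _ _ = _
      exact pd_complete hH hj⟩
    have : pdNum H ≤ 1 := Nat.sInf_le ⟨{w}, hPDS, Finset.card_singleton w⟩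
    omega

end JoinR

section Misc
variable {V : Type*} [Fintype V] {G : SimpleGraph V}

lemma pdSeq_empty (G : SimpleGraph V) : ∀ i : ℕ, pdSeq G ∅ i = ∅
  | 0 => rfl
  | 1 => by simp [pdSeq, closedNbhd]
  | (i + 2) => by
    show pdStep G (pdSeq G ∅ (i + 1)) = ∅
    rw [pdSeq_empty G (i + 1)]
    simp [pdStep, closedNbhd]

lemma not_isPDS_empty [Nonempty V] (G : SimpleGraph V) : ¬ IsPDS G ∅ := by
  rintro ⟨i, hi⟩
  rw [pdSeq_empty] at hi
  have : (Finset.univ : Finset V).Nonempty := Finset.univ_nonempty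
  rw [← hi] at this
  exact Finset.not_nonempty_empty this

lemma nonempty_of_pdNum (h : 1 ≤ pdNum G) : Nonempty V := by
  by_contra h'
  haveI := not_nonempty_iff.mp h'
  have h0 : IsPDS G ∅ := ⟨0, by simp [pdSeq]⟩
  have : pdNum G ≤ 0 := Nat.sInf_le ⟨∅, h0, Finset.card_empty⟩
  omega

lemma pdRadS_ne_zero [Nonempty V] {S : Finset V} (hS : IsPDS G S) : pdRadS G S ≠ 0 := by
  intro h0
  have hmem : pdRadS G S ∈ {i | pdSeq G S i = Finset.univ} := Nat.sInf_mem hS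
  rw [h0] at hmem
  have : (Finset.univ : Finset V).Nonempty := Finset.univ_nonempty
  rw [← hmem] at this
  exact Finset.not_nonempty_empty this

end Misc

theorem stmt_13 {V W : Type*} [Fintype V] [Fintype W]
    (G : SimpleGraph V) (H : SimpleGraph W)
    (hG : ∀ v : V, ∃ u, G.Adj v u) (hH : ∀ v : W, ∃ u, H.Adj v u)
    (hgG : 2 ≤ pdNum G) (hgH : 2 ≤ pdNum H) :
    pdNum (graphJoin G H) = 2 ∧ pdRad (graphJoin G H) = 1 := by
  haveI : Nonempty V := nonempty_of_pdNum (G := G) (by omega)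
  haveI : Nonempty W := nonempty_of_pdNum (G := H) (by omega)
  obtain ⟨v⟩ := ‹Nonempty V›
  obtain ⟨w⟩ := ‹Nonempty W›
  set J := graphJoin G H with hJ
  set S : Finset (V ⊕ W) := {Sum.inl v, Sum.inr w} with hSdef
  have hS1 : pdSeq J S 1 = Finset.univ := by
    apply Finset.eq_univ_iff_forall.mpr
    rintro (a | b)
    · exact mem_closedNbhd.mpr (Or.inr ⟨Sum.inr w, by simp [hSdef], trivial⟩)
    · exact mem_closedNbhd.mpr (Or.inr ⟨Sum.inl v, by simp [hSdef], trivial⟩)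
  have hPDS : IsPDS J S := ⟨1, hS1⟩
  have hScard : S.card = 2 := by
    rw [hSdef]
    rw [Finset.card_insert_of_notMem (by simp), Finset.card_singleton]
  have hnum : pdNum J = 2 := by
    have h2mem : 2 ∈ {k | ∃ T : Finset (V ⊕ W), IsPDS J T ∧ T.card = k} := ⟨S, hPDS, hScard⟩
    have hle : pdNum J ≤ 2 := Nat.sInf_le h2mem
    obtain ⟨T, hT, hTcard⟩ := Nat.sInf_mem (⟨2, h2mem⟩ :
      {k | ∃ T : Finset (V ⊕ W), IsPDS J T ∧ T.card = k}.Nonempty)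
    have hTcard' : T.card = pdNum J := hTcard
    rcases Nat.lt_or_ge (pdNum J) 2 with hlt | hge
    · exfalso
      interval_cases h : pdNum J
      · rw [Finset.card_eq_zero.mp hTcard'] at hT
        exact not_isPDS_empty J hT
      · obtain ⟨x, rfl⟩ := Finset.card_eq_one.mp hTcard'
        rcases x with a | b
        · exact not_isPDS_singleton_inl hG hgG a hT
        · exact not_isPDS_singleton_inr hH hgH b hT
    · omega
  have hradS : pdRadS J S = 1 := by
    have h1 : pdRadS J S ≤ 1 := Nat.sInf_le hS1
    have h0 := pdRadS_ne_zero hPDS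
    omega
  refine ⟨hnum, ?_⟩
  have h1mem : 1 ∈ {r | ∃ T : Finset (V ⊕ W), IsPDS J T ∧ T.card = pdNum J ∧ pdRadS J T = r} :=
    ⟨S, hPDS, by rw [hnum]; exact hScard, hradS⟩
  have hle : pdRad J ≤ 1 := Nat.sInf_le h1mem
  obtain ⟨T, hT, _, hTrad⟩ := Nat.sInf_mem (⟨1, h1mem⟩ :
    {r | ∃ T : Finset (V ⊕ W), IsPDS J T ∧ T.card = pdNum J ∧ pdRadS J T = r}.Nonempty)
  have hTrad' : pdRadS J T = pdRad J := hTrad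
  have : pdRad J ≠ 0 := by
    intro h0
    exact pdRadS_ne_zero hT (by rw [hTrad', h0])
  omega
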